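/- arXiv:2001.10193 — 3 statements merged into one kernel-verified Lean document; each statement's English description precedes it below -/
import Mathlib

section
/- Let u : ℝ^N → ℝ be a C² function and g : ℝ → [0,∞) be a C¹ function. Then at every point x where g(u(x)) ≠ 0, the inequality g(u)|D²u|² + g'(u)·( (1/2)∇u·∇(|∇u|²) − |∇u|²·Δu ) ≥ −((N−1)·g'(u)²·|∇u|⁴)/(4·g(u)) holds, where |D²u|² denotes the sum of squares of all second partial derivatives ∂ᵢⱼu. -/
open scoped BigOperators

/-- First partial derivative of `u` in direction `i`. -/
noncomputable def pderiv1 (N : ℕ) (u : (Fin N → ℝ) → ℝ) (i : Fin N) (x : Fin N → ℝ) : ℝ :=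
  fderiv ℝ u x (Pi.single i 1)

/-- Second partial derivative `∂ᵢⱼ u`. -/
noncomputable def pderiv2 (N : ℕ) (u : (Fin N → ℝ) → ℝ) (i j : Fin N) (x : Fin N → ℝ) : ℝ :=
  fderiv ℝ (pderiv1 N u j) x (Pi.single i 1)

/-- Algebraic (sum-of-squares) core of the Bénilan inequality. -/
lemma benilan_alg (N : ℕ) (a b : ℝ) (ha : 0 < a) (H : Fin N → Fin N → ℝ) (p : Fin N → ℝ) :
    a * (∑ i, ∑ j, (H i j)^2) + b * ((∑ i, ∑ j, p i * p j * H i j)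
        - (∑ j, (p j)^2) * (∑ i, H i i))
      ≥ -(((N:ℝ) - 1) * b^2 * (∑ j, (p j)^2)^2) / (4 * a) := by
  set s : ℝ := ∑ j, (p j)^2 with hs
  have hexp : ∀ i j : Fin N, (2*a*H i j + b*(p i * p j - s * (if i = j then (1:ℝ) else 0)))^2
      = (4*a^2*(H i j)^2 + 4*a*b*(p i * p j * H i j) + b^2*((p i)^2 * (p j)^2))
        + (if i = j then (b^2*s^2 - 4*a*b*s*H i j - 2*b^2*s*((p i)^2)) else 0) := by
    intro i j; split_ifs with h
    · subst h; ring
    · ring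
  have key0 : (0:ℝ) ≤ ∑ i, ∑ j, (2*a*H i j + b*(p i * p j - s * (if i = j then (1:ℝ) else 0)))^2 :=
    Finset.sum_nonneg fun i _ => Finset.sum_nonneg fun j _ => sq_nonneg _
  have hsum : ∑ i, ∑ j, (2*a*H i j + b*(p i * p j - s * (if i = j then (1:ℝ) else 0)))^2
      = 4*a^2*(∑ i, ∑ j, (H i j)^2) + 4*a*b*(∑ i, ∑ j, p i * p j * H i j) + b^2*s^2
        + ((N:ℝ)*b^2*s^2 - 4*a*b*s*(∑ i, H i i) - 2*b^2*s*s) := by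
    simp only [hexp, Finset.sum_add_distrib, Finset.sum_ite_eq, Finset.mem_univ, if_true]
    have h1 : ∑ i : Fin N, ∑ j : Fin N, 4*a^2*(H i j)^2 = 4*a^2*(∑ i, ∑ j, (H i j)^2) := by
      simp [Finset.mul_sum]
    have h2 : ∑ i : Fin N, ∑ j : Fin N, 4*a*b*(p i * p j * H i j)
        = 4*a*b*(∑ i, ∑ j, p i * p j * H i j) := by simp [Finset.mul_sum]
    have h3 : ∑ i : Fin N, ∑ j : Fin N, b^2*((p i)^2 * (p j)^2) = b^2*s^2 := by
      rw [sq s, hs, Finset.sum_mul_sum]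
      simp [Finset.mul_sum]
    have h4 : ∑ i : Fin N, (b^2*s^2 - 4*a*b*s*H i i - 2*b^2*s*((p i)^2))
        = (N:ℝ)*b^2*s^2 - 4*a*b*s*(∑ i, H i i) - 2*b^2*s*s := by
      rw [Finset.sum_sub_distrib, Finset.sum_sub_distrib, Finset.sum_const, ← Finset.mul_sum,
        ← Finset.mul_sum]
      simp [hs]; ring
    rw [h1, h2, h3, h4]
  rw [hsum] at key0
  rw [ge_iff_le, neg_div, neg_le]
  rw [le_div_iff₀ (by positivity : (0:ℝ) < 4*a)]
  nlinarith [key0]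

/-- Derivative of the squared-gradient: `∂ᵢ |∇u|² = 2 ∑ⱼ ∂ⱼu ∂ᵢⱼu`. -/
lemma pderiv1_gradsq (N : ℕ) (u : (Fin N → ℝ) → ℝ) (hu : ContDiff ℝ 2 u)
    (x : Fin N → ℝ) (i : Fin N) :
    pderiv1 N (fun y => ∑ j, (pderiv1 N u j y) ^ 2) i x
      = ∑ j, 2 * pderiv1 N u j x * pderiv2 N u i j x := by
  have hp1 : ∀ j : Fin N, ContDiff ℝ 1 (fun y => fderiv ℝ u y (Pi.single j 1)) := by
    intro j
    exact (hu.fderiv_right (m := 1) le_rfl).clm_apply contDiff_const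
  have hj : ∀ j : Fin N, HasFDerivAt (fun y => (fderiv ℝ u y (Pi.single j 1)) ^ 2)
      ((2 * fderiv ℝ u x (Pi.single j 1)) • fderiv ℝ (fun y => fderiv ℝ u y (Pi.single j 1)) x) x := by
    intro j
    have hd : HasFDerivAt (fun y => fderiv ℝ u y (Pi.single j 1))
        (fderiv ℝ (fun y => fderiv ℝ u y (Pi.single j 1)) x) x :=
      ((hp1 j).differentiable one_ne_zero x).hasFDerivAt
    have := hd.fun_mul hd
    simpa [pow_two, two_mul, add_smul] using this
  have hF : HasFDerivAt (fun y => ∑ j, (fderiv ℝ u y (Pi.single j 1)) ^ 2)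
      (∑ j, (2 * fderiv ℝ u x (Pi.single j 1)) • fderiv ℝ (fun y => fderiv ℝ u y (Pi.single j 1)) x) x :=
    HasFDerivAt.fun_sum (fun j _ => hj j)
  unfold pderiv1 pderiv2
  rw [hF.fderiv]
  simp only [ContinuousLinearMap.sum_apply, ContinuousLinearMap.smul_apply, smul_eq_mul]
  exact Finset.sum_congr rfl fun j _ => by unfold pderiv1; ring

/-- Bénilan-type inequality: for `u ∈ C²(ℝᴺ,ℝ)` and `g ∈ C¹(ℝ,[0,∞))`, at every point where
`g(u(x)) ≠ 0`,
`g(u)|D²u|² + g'(u)((1/2)∇u·∇(|∇u|²) − |∇u|²Δu) ≥ −((N−1) g'(u)² |∇u|⁴)/(4 g(u))`. -/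
theorem stmt0 (N : ℕ) (hN : 1 ≤ N) (u : (Fin N → ℝ) → ℝ) (hu : ContDiff ℝ 2 u)
    (g : ℝ → ℝ) (hg : ContDiff ℝ 1 g) (hg0 : ∀ s, 0 ≤ g s)
    (x : Fin N → ℝ) (hgx : g (u x) ≠ 0) :
    g (u x) * (∑ i, ∑ j, (pderiv2 N u i j x) ^ 2) +
      deriv g (u x) *
        ((1 / 2) * (∑ i, pderiv1 N u i x *
            pderiv1 N (fun y => ∑ j, (pderiv1 N u j y) ^ 2) i x)
          - (∑ j, (pderiv1 N u j x) ^ 2) * (∑ i, pderiv2 N u i i x)) ≥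
      -(((N : ℝ) - 1) * (deriv g (u x)) ^ 2 * (∑ j, (pderiv1 N u j x) ^ 2) ^ 2) /
        (4 * g (u x)) := by
  have ha : 0 < g (u x) := lt_of_le_of_ne (hg0 (u x)) (Ne.symm hgx)
  have hhalf : (1 / 2 : ℝ) * (∑ i, pderiv1 N u i x *
        pderiv1 N (fun y => ∑ j, (pderiv1 N u j y) ^ 2) i x)
      = ∑ i, ∑ j, pderiv1 N u i x * pderiv1 N u j x * pderiv2 N u i j x := by
    rw [Finset.mul_sum]
    refine Finset.sum_congr rfl fun i _ => ?_
    rw [pderiv1_gradsq N u hu x i, Finset.mul_sum, Finset.mul_sum]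
    exact Finset.sum_congr rfl fun j _ => by ring
  rw [hhalf]
  exact benilan_alg N (g (u x)) (deriv g (u x)) ha
    (fun i j => pderiv2 N u i j x) (fun i => pderiv1 N u i x)
end

section
/- Let m > 0, β ∈ (0, m), λ > 0 and set K = (λ(m+β)²/(2m(N(m+β)−2β)))^(m/(m+β)). If N ≥ 1 and N(m+β) − 2β > 0, then K > 0 and the function u(x) = K^(1/m)·|x − x₀|^(2/(m+β)) satisfies −Δ(u^m) + λ·u^(−β) = 0 at every x ≠ x₀. -/
open scoped BigOperators

/-- The Laplacian of `f : ℝᴺ → ℝ` as the sum of second partial derivatives along the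
standard coordinate directions. -/
noncomputable def lap (N : ℕ) (f : EuclideanSpace ℝ (Fin N) → ℝ)
    (x : EuclideanSpace ℝ (Fin N)) : ℝ :=
  ∑ i, fderiv ℝ (fun y => fderiv ℝ f y (EuclideanSpace.single i 1)) x (EuclideanSpace.single i 1)

theorem lap_rpow_aux (N : ℕ) (c : EuclideanSpace ℝ (Fin N)) (K p : ℝ)
    (x : EuclideanSpace ℝ (Fin N)) (hx : x ≠ c) :
    lap N (fun y => K * (∑ i, (y i - c i)^2) ^ p) x
      = 2 * K * p * (2 * (p - 1) + N) * (∑ i, (x i - c i)^2) ^ (p - 1) := by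
  set S : EuclideanSpace ℝ (Fin N) → ℝ := fun y => ∑ i, (y i - c i)^2 with hSdef
  set L : EuclideanSpace ℝ (Fin N) → (EuclideanSpace ℝ (Fin N) →L[ℝ] ℝ) :=
    fun y => ∑ i, (2*(y i - c i)) • (EuclideanSpace.proj i : EuclideanSpace ℝ (Fin N) →L[ℝ] ℝ)
    with hLdef
  have hproj : ∀ i : Fin N, (EuclideanSpace.proj i : EuclideanSpace ℝ (Fin N) →L[ℝ] ℝ)
      (EuclideanSpace.single i 1) = 1 := by
    intro i; simp [EuclideanSpace.single_apply]
  have hL : ∀ y, HasFDerivAt S (L y) y := by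
    intro y
    apply HasFDerivAt.fun_sum
    intro i _
    have h0 : HasFDerivAt (fun z : EuclideanSpace ℝ (Fin N) => z i - c i)
        (EuclideanSpace.proj i : EuclideanSpace ℝ (Fin N) →L[ℝ] ℝ) y :=
      (EuclideanSpace.proj i : EuclideanSpace ℝ (Fin N) →L[ℝ] ℝ).hasFDerivAt.sub_const (c i)
    have h := h0.mul h0
    simp only [sq]
    convert h using 1
    case e'_8 => rfl
    case e'_11 => rfl
    rw [two_mul, add_smul]
  have hLapp : ∀ y (i : Fin N), L y (EuclideanSpace.single i 1) = 2 * (y i - c i) := by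
    intro y i
    simp only [hLdef, ContinuousLinearMap.sum_apply, ContinuousLinearMap.smul_apply,
      PiLp.proj_apply, EuclideanSpace.single_apply, smul_eq_mul, mul_ite, mul_one, mul_zero]
    rw [Finset.sum_ite_eq' Finset.univ i (fun j => 2 * (y j - c j))]
    simp
  have hScont : Continuous S := by
    apply continuous_finset_sum
    intro i _
    exact (((continuous_apply i).comp (PiLp.continuous_ofLp 2 _)).sub continuous_const).pow 2
  have hS0 : ∀ y, 0 ≤ S y := fun y => Finset.sum_nonneg fun i _ => sq_nonneg _
  have hSx : 0 < S x := by
    obtain ⟨i, hi⟩ : ∃ i, x i ≠ c i := by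
      by_contra h
      push_neg at h
      exact hx (by ext j; exact h j)
    refine Finset.sum_pos' (fun j _ => sq_nonneg _) ⟨i, Finset.mem_univ i, ?_⟩
    have : 0 < |x i - c i| := abs_pos.mpr (sub_ne_zero.mpr hi)
    calc 0 < |x i - c i| ^ 2 := by positivity
    _ = (x i - c i) ^ 2 := sq_abs _
  set U : Set (EuclideanSpace ℝ (Fin N)) := S ⁻¹' ({0}ᶜ) with hUdef
  have hUopen : IsOpen U := isOpen_compl_singleton.preimage hScont
  have hxU : x ∈ U := by simpa [hUdef] using hSx.ne'
  have hf : ∀ y ∈ U, HasFDerivAt (fun z => K * S z ^ p)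
      ((K * (p * S y ^ (p-1))) • L y) y := by
    intro y hy
    have hy0 : S y ≠ 0 := hy
    have h1 : HasDerivAt (fun t : ℝ => t ^ p) (p * S y ^ (p-1)) (S y) :=
      Real.hasDerivAt_rpow_const (Or.inl hy0)
    have h2 : HasFDerivAt (fun z => S z ^ p) ((p * S y ^ (p-1)) • L y) y :=
      h1.comp_hasFDerivAt y (hL y)
    have h3 := h2.const_mul K
    simpa [smul_smul] using h3
  have hφψ : ∀ i : Fin N, (fun y => fderiv ℝ (fun z => K * S z ^ p) y (EuclideanSpace.single i 1))
      =ᶠ[nhds x] (fun y => (2*K*p) * (S y ^ (p-1) * (y i - c i))) := by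
    intro i
    filter_upwards [hUopen.mem_nhds hxU] with y hy
    rw [(hf y hy).fderiv]
    simp only [ContinuousLinearMap.smul_apply, hLapp y i, smul_eq_mul]
    ring
  have hψ : ∀ i : Fin N, HasFDerivAt (fun y => (2*K*p) * (S y ^ (p-1) * (y i - c i)))
      ((2*K*p) • ((S x ^ (p-1)) • (EuclideanSpace.proj i : EuclideanSpace ℝ (Fin N) →L[ℝ] ℝ)
        + (x i - c i) • (((p-1) * S x ^ (p-1-1)) • L x))) x := by
    intro i
    have hA : HasFDerivAt (fun y => S y ^ (p-1)) (((p-1) * S x ^ (p-1-1)) • L x) x :=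
      (Real.hasDerivAt_rpow_const (Or.inl hSx.ne')).comp_hasFDerivAt x (hL x)
    have hB : HasFDerivAt (fun z : EuclideanSpace ℝ (Fin N) => z i - c i)
        (EuclideanSpace.proj i : EuclideanSpace ℝ (Fin N) →L[ℝ] ℝ) x :=
      (EuclideanSpace.proj i : EuclideanSpace ℝ (Fin N) →L[ℝ] ℝ).hasFDerivAt.sub_const (c i)
    exact (hA.mul hB).const_mul (2*K*p)
  have hterm : ∀ i : Fin N,
      fderiv ℝ (fun y => fderiv ℝ (fun z => K * S z ^ p) y (EuclideanSpace.single i 1)) x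
        (EuclideanSpace.single i 1)
      = (2*K*p) * (S x ^ (p-1) + (p-1) * S x ^ (p-1-1) * (2 * (x i - c i)^2)) := by
    intro i
    rw [(hφψ i).fderiv_eq, (hψ i).fderiv]
    simp only [ContinuousLinearMap.smul_apply, ContinuousLinearMap.add_apply, hLapp x i,
      hproj i, smul_eq_mul]
    ring
  have hlap : lap N (fun y => K * S y ^ p) x
      = ∑ i : Fin N, (2*K*p) * (S x ^ (p-1) + (p-1) * S x ^ (p-1-1) * (2 * (x i - c i)^2)) := by
    unfold lap
    exact Finset.sum_congr rfl fun i _ => hterm i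
  have hsum : ∑ i : Fin N, (2*K*p) * (S x ^ (p-1) + (p-1) * S x ^ (p-1-1) * (2 * (x i - c i)^2))
      = (2*K*p) * ((N : ℝ) * S x ^ (p-1) + (p-1) * S x ^ (p-1-1) * 2 * S x) := by
    have h2S : ∑ i : Fin N, 2 * (x i - c i)^2 = 2 * S x := by
      rw [hSdef, Finset.mul_sum]
    rw [← Finset.mul_sum, Finset.sum_add_distrib, Finset.sum_const, Finset.card_univ,
      Fintype.card_fin, nsmul_eq_mul, ← Finset.mul_sum, h2S]
    ring
  have hpow : S x ^ (p-1-1) * S x = S x ^ (p-1) := by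
    nth_rewrite 2 [← Real.rpow_one (S x)]
    rw [← Real.rpow_add hSx]
    ring_nf
  have hfin : (p-1) * S x ^ (p-1-1) * 2 * S x = 2 * (p-1) * S x ^ (p-1) := by
    rw [mul_assoc ((p-1) * S x ^ (p-1-1)) 2 (S x), mul_comm 2 (S x), ← mul_assoc,
      mul_assoc (p-1) (S x ^ (p-1-1)) (S x), hpow]
    ring
  calc lap N (fun y => K * S y ^ p) x
      = (2*K*p) * ((N : ℝ) * S x ^ (p-1) + (p-1) * S x ^ (p-1-1) * 2 * S x) := by
        rw [hlap, hsum]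
    _ = 2 * K * p * (2 * (p - 1) + N) * S x ^ (p - 1) := by rw [hfin]; ring

/-- With `K = (λ(m+β)²/(2m(N(m+β)−2β)))^{m/(m+β)}`, if `N ≥ 1` and `N(m+β) − 2β > 0`, then
`K > 0` and `u(x) = K^{1/m}|x−x₀|^{2/(m+β)}` satisfies `−Δ(u^m) + λ u^{−β} = 0` for `x ≠ x₀`. -/
theorem stmt5 (N : ℕ) (hN : 1 ≤ N) (m β lam : ℝ) (hm : 0 < m) (hβ0 : 0 < β) (hβm : β < m)
    (hlam : 0 < lam) (hpos : 0 < (N : ℝ) * (m + β) - 2 * β)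
    (x₀ : EuclideanSpace ℝ (Fin N)) (K : ℝ)
    (hK : K = (lam * (m + β) ^ 2 / (2 * m * ((N : ℝ) * (m + β) - 2 * β))) ^ (m / (m + β))) :
    0 < K ∧
    ∀ x : EuclideanSpace ℝ (Fin N), x ≠ x₀ →
      -lap N (fun y => (K ^ (1 / m) * ‖y - x₀‖ ^ (2 / (m + β))) ^ m) x
          + lam * (K ^ (1 / m) * ‖x - x₀‖ ^ (2 / (m + β))) ^ (-β) = 0 := by
  have hmβ : 0 < m + β := by linarith
  set B : ℝ := lam * (m + β) ^ 2 / (2 * m * ((N : ℝ) * (m + β) - 2 * β)) with hBdef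
  have hB : 0 < B := div_pos (by positivity) (by positivity)
  have hK0 : 0 < K := by rw [hK]; exact Real.rpow_pos_of_pos hB _
  refine ⟨hK0, ?_⟩
  intro x hx
  set p : ℝ := m / (m + β) with hpdef
  have hSnorm : ∀ y : EuclideanSpace ℝ (Fin N),
      ‖y - x₀‖ = (∑ i, (y i - x₀ i)^2) ^ ((1:ℝ)/2) := by
    intro y
    rw [EuclideanSpace.norm_eq, ← Real.sqrt_eq_rpow]
    congr 1
    refine Finset.sum_congr rfl fun i _ => ?_
    simp [Real.norm_eq_abs, sq_abs]
  have hS0 : ∀ y : EuclideanSpace ℝ (Fin N), 0 ≤ ∑ i, (y i - x₀ i)^2 :=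
    fun y => Finset.sum_nonneg fun i _ => sq_nonneg _
  have hfun : (fun y : EuclideanSpace ℝ (Fin N) =>
      (K ^ (1 / m) * ‖y - x₀‖ ^ (2 / (m + β))) ^ m)
      = fun y => K * (∑ i, (y i - x₀ i)^2) ^ p := by
    funext y
    rw [hSnorm y, ← Real.rpow_mul (hS0 y),
      Real.mul_rpow (Real.rpow_nonneg hK0.le _) (Real.rpow_nonneg (hS0 y) _),
      ← Real.rpow_mul hK0.le, ← Real.rpow_mul (hS0 y),
      show (1 / m) * m = (1:ℝ) by field_simp,
      show (1:ℝ)/2 * (2 / (m + β)) * m = p by rw [hpdef]; field_simp,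
      Real.rpow_one]
  have hrhs : (K ^ (1 / m) * ‖x - x₀‖ ^ (2 / (m + β))) ^ (-β)
      = K ^ ((1/m) * (-β)) * (∑ i, (x i - x₀ i)^2) ^ (p - 1) := by
    rw [hSnorm x, ← Real.rpow_mul (hS0 x),
      Real.mul_rpow (Real.rpow_nonneg hK0.le _) (Real.rpow_nonneg (hS0 x) _),
      ← Real.rpow_mul hK0.le, ← Real.rpow_mul (hS0 x),
      show (1:ℝ)/2 * (2 / (m + β)) * (-β) = p - 1 by rw [hpdef]; field_simp; ring]
  have hKB : K ^ ((1/m) * (-β)) = K / B := by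
    have h1 : K ^ (β / m) = B ^ (β / (m + β)) := by
      rw [hK, ← Real.rpow_mul hB.le]
      congr 1
      rw [hpdef]
      field_simp
    have h2 : K * K ^ (β / m) = B := by
      rw [h1, hK, ← Real.rpow_add hB,
        show m / (m + β) + β / (m + β) = (1:ℝ) by field_simp, Real.rpow_one]
    have h3 : K ^ (β / m) = B / K := by
      field_simp at h2 ⊢
      linarith [h2]
    rw [show (1/m) * (-β) = -(β/m) by ring, Real.rpow_neg hK0.le, h3]
    rw [inv_div]
  rw [hfun, lap_rpow_aux N x₀ K p x hx, hrhs, hKB]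
  have hcoef : lam * (K / B) = 2 * K * p * (2 * (p - 1) + N) := by
    rw [hBdef, hpdef]
    field_simp
    ring
  linear_combination (∑ i, (x i - x₀ i)^2) ^ (p - 1) * hcoef
end

section
/- Let m ≥ 2 + β with β > 0, and p as above with N₀ > 0. Then for all y ∈ [0,1]: −m·( (m/(m−1))·p''(y) + p(y)·(p''/p')'(y) ) ≥ 2m²N₀/(3(m−1)) + (m/4)·p(y) ≥ 2m²N₀/(3(m−1)). -/
/-- The auxiliary function `p(y) = N₀ y (4 − y)/3`. -/
noncomputable def pfun (N₀ : ℝ) : ℝ → ℝ := fun y => N₀ * y * (4 - y) / 3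

lemma pfun_hasDerivAt (N₀ y : ℝ) : HasDerivAt (pfun N₀) (N₀ * (4 - 2 * y) / 3) y := by
  have h := (((hasDerivAt_id y).const_mul N₀).mul
    ((hasDerivAt_const y 4).sub (hasDerivAt_id y))).div_const 3
  refine h.congr_deriv ?_
  simp [id_eq]
  ring

lemma pfun_deriv (N₀ : ℝ) : deriv (pfun N₀) = fun y => N₀ * (4 - 2 * y) / 3 := by
  funext y; exact (pfun_hasDerivAt N₀ y).deriv

lemma pfun_deriv2 (N₀ : ℝ) : deriv (deriv (pfun N₀)) = fun _ => -2 * N₀ / 3 := by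
  rw [pfun_deriv]
  funext y
  have h := (((hasDerivAt_id y).const_mul 2).const_sub 4).const_mul N₀ |>.div_const 3
  have h' : HasDerivAt (fun y : ℝ => N₀ * (4 - 2 * y) / 3) (-2 * N₀ / 3) y := by
    refine h.congr_deriv ?_; ring
  exact h'.deriv

/-- For `m ≥ 2 + β`, `β > 0` and `N₀ > 0`, for all `y ∈ [0,1]`:
`−m((m/(m−1))p'' + p(y)(p''/p')'(y)) ≥ 2m²N₀/(3(m−1)) + (m/4)p(y) ≥ 2m²N₀/(3(m−1))`. -/
theorem stmt17 (m β N₀ : ℝ) (hβ : 0 < β) (hm : 2 + β ≤ m) (hN₀ : 0 < N₀) :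
    ∀ y ∈ Set.Icc (0 : ℝ) 1,
      2 * m ^ 2 * N₀ / (3 * (m - 1)) ≤
        2 * m ^ 2 * N₀ / (3 * (m - 1)) + (m / 4) * pfun N₀ y ∧
      2 * m ^ 2 * N₀ / (3 * (m - 1)) + (m / 4) * pfun N₀ y ≤
        -(m * ((m / (m - 1)) * deriv (deriv (pfun N₀)) y +
            pfun N₀ y * deriv (fun z => deriv (deriv (pfun N₀)) z / deriv (pfun N₀) z) y)) := by
  intro y hy
  obtain ⟨hy0, hy1⟩ := hy
  have hm0 : (0:ℝ) < m := by linarith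
  have hm1 : (0:ℝ) < m - 1 := by linarith
  have hp : 0 ≤ pfun N₀ y := by
    have h4 : 0 ≤ 4 - y := by linarith
    unfold pfun
    exact div_nonneg (mul_nonneg (mul_nonneg hN₀.le hy0) h4) (by norm_num)
  have hfn : (fun z => deriv (deriv (pfun N₀)) z / deriv (pfun N₀) z)
      = fun z => -2 / (4 - 2 * z) := by
    funext z
    rw [pfun_deriv2, pfun_deriv]
    rcases eq_or_ne (4 - 2 * z) 0 with h | h
    · simp [h]
    · field_simp
  have hden : (4 - 2 * y) ≠ 0 := by nlinarith
  have hder : deriv (fun z : ℝ => -2 / (4 - 2 * z)) y = -4 / (4 - 2 * y) ^ 2 := by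
    have hd : HasDerivAt (fun z : ℝ => 4 - 2 * z) (-2) y := by
      have := ((hasDerivAt_id y).const_mul 2).const_sub 4
      refine this.congr_deriv ?_; norm_num
    have h := (hasDerivAt_const y (-2 : ℝ)).div hd hden
    have : (0 * (4 - 2 * y) - -2 * -2) / (4 - 2 * y) ^ 2 = -4 / (4 - 2 * y) ^ 2 := by ring
    rw [this] at h
    exact h.deriv
  rw [hfn, hder, pfun_deriv2]
  constructor
  · nlinarith
  · have hsq : (0:ℝ) < (4 - 2 * y) ^ 2 := by positivity
    have key : (m / 4) * pfun N₀ y ≤ -(pfun N₀ y * (-4 / (4 - 2 * y) ^ 2)) * m := by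
      have h2 : -(pfun N₀ y * (-4 / (4 - 2 * y) ^ 2)) * m
          = pfun N₀ y * 4 * m / (4 - 2 * y) ^ 2 := by ring
      rw [h2, le_div_iff₀ hsq]
      have h16 : (4 - 2 * y) ^ 2 ≤ 16 := by nlinarith
      nlinarith [mul_nonneg (mul_nonneg hm0.le hp) (sub_nonneg.2 h16)]
    have heq : -(m * ((m / (m - 1)) * (-2 * N₀ / 3) + pfun N₀ y * (-4 / (4 - 2 * y) ^ 2)))
        = 2 * m ^ 2 * N₀ / (3 * (m - 1)) + -(pfun N₀ y * (-4 / (4 - 2 * y) ^ 2)) * m := by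
      field_simp
      ring
    rw [heq]
    linarith
end
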